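/- Let p be a prime with p \equiv 1 (mod 4), \chi_4 a character of F_p^* of order 4 (extended by 0 at 0), \phi the quadratic character. With a_p(\lambda) := -\sum_{x \in F_p} \phi(x(x-1)(x-\lambda)), one has \sum_{\lambda \ne 0,1, \phi(\lambda(\lambda-1))=1} a_p(\lambda) \chi_4(\lambda(\lambda-1)) \phi(\lambda-1) = \sum_{\lambda \ne 0,1, \phi(\lambda)=1} a_p(\lambda) \chi_4(\lambda) \phi(\lambda-1). -/

import Mathlib

/-- The trace of Frobenius of the Legendre curve `y² = x(x-1)(x-λ)` over `𝔽_p`,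
given as a character sum. -/
def apLegendre (p : ℕ) [Fact p.Prime] (lam : ZMod p) : ℤ :=
  -∑ x : ZMod p, quadraticChar (ZMod p) (x * (x - 1) * (x - lam))

section aux

variable {p : ℕ} [Fact p.Prime]

lemma phi_sq (d : ZMod p) (hd : d ≠ 0) :
    quadraticChar (ZMod p) d * quadraticChar (ZMod p) d = 1 := by
  have := quadraticChar_sq_one hd
  rwa [sq] at this

lemma phi_ne (d : ZMod p) (hd : d ≠ 0) : quadraticChar (ZMod p) d ≠ 0 := by
  rcases quadraticChar_dichotomy hd with h | h <;> rw [h] <;> norm_num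

lemma phi_inv (d : ZMod p) (hd : d ≠ 0) :
    quadraticChar (ZMod p) d⁻¹ = quadraticChar (ZMod p) d := by
  have h1 : quadraticChar (ZMod p) d⁻¹ * quadraticChar (ZMod p) d = 1 := by
    rw [← map_mul, inv_mul_cancel₀ hd, map_one]
  exact mul_right_cancel₀ (phi_ne d hd) (h1.trans (phi_sq d hd).symm)

lemma phi_neg_one (hp : p % 4 = 1) : quadraticChar (ZMod p) (-1) = 1 := by
  rw [quadraticChar_one_iff_isSquare (by simp : (-1 : ZMod p) ≠ 0)]
  exact ZMod.exists_sq_eq_neg_one_iff.2 (by omega)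

lemma ap_step (hp : p % 4 = 1) (a : ZMod p) (hd : a - 1 ≠ 0) :
    apLegendre p (a * (a - 1)⁻¹) = quadraticChar (ZMod p) (a - 1) * apLegendre p a := by
  unfold apLegendre
  rw [mul_neg, ← neg_inj, neg_neg, neg_neg, Finset.mul_sum]
  refine Finset.sum_nbij' (fun x => a - x * (a - 1)) (fun v => (a - v) * (a - 1)⁻¹)
    (fun _ _ => Finset.mem_univ _) (fun _ _ => Finset.mem_univ _) ?_ ?_ ?_
  · intro x _; field_simp; ring
  · intro v _; field_simp; ring
  · intro x _
    have hkey : x * (x - 1) * (x - a * (a - 1)⁻¹) =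
        (-1) * ((a - x * (a - 1)) * ((a - x * (a - 1)) - 1) * ((a - x * (a - 1)) - a)) *
          ((a - 1)⁻¹) ^ 3 := by
      field_simp
      ring
    rw [hkey, map_mul, map_mul, map_pow, phi_neg_one hp, phi_inv _ hd, one_mul]
    have h3 : quadraticChar (ZMod p) (a - 1) ^ 3 = quadraticChar (ZMod p) (a - 1) := by
      rw [pow_succ, sq, phi_sq _ hd, one_mul]
    rw [h3, mul_comm]


lemma map_sub_one (a : ZMod p) (hd : a - 1 ≠ 0) : a * (a - 1)⁻¹ - 1 = (a - 1)⁻¹ := by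
  field_simp
  ring

lemma invol (a : ZMod p) (hd : a - 1 ≠ 0) :
    a * (a - 1)⁻¹ * (a * (a - 1)⁻¹ - 1)⁻¹ = a := by
  rw [map_sub_one a hd, inv_inv, mul_assoc, inv_mul_cancel₀ hd, mul_one]

end aux

theorem stmt_11 (p : ℕ) [Fact p.Prime] (hp : p % 4 = 1) (χ₄ : MulChar (ZMod p) ℂ)
    (hord : orderOf χ₄ = 4)
    (hsq : χ₄ ^ 2 = (quadraticChar (ZMod p)).ringHomComp (Int.castRingHom ℂ)) :
    ∑ lam ∈ Finset.univ.filter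
        (fun lam : ZMod p =>
          lam ≠ 0 ∧ lam ≠ 1 ∧ quadraticChar (ZMod p) (lam * (lam - 1)) = 1),
      (apLegendre p lam : ℂ) * χ₄ (lam * (lam - 1)) *
        (quadraticChar (ZMod p) (lam - 1) : ℂ) =
    ∑ lam ∈ Finset.univ.filter
        (fun lam : ZMod p => lam ≠ 0 ∧ lam ≠ 1 ∧ quadraticChar (ZMod p) lam = 1),
      (apLegendre p lam : ℂ) * χ₄ lam * (quadraticChar (ZMod p) (lam - 1) : ℂ) := by
  refine Finset.sum_nbij' (fun lam => lam * (lam - 1)⁻¹) (fun lam => lam * (lam - 1)⁻¹)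
    ?_ ?_ ?_ ?_ ?_
  · intro a ha
    simp only [Finset.mem_filter, Finset.mem_univ, true_and] at ha ⊢
    obtain ⟨h0, h1, hφ⟩ := ha
    have hd : a - 1 ≠ 0 := sub_ne_zero.2 h1
    refine ⟨mul_ne_zero h0 (inv_ne_zero hd), ?_, ?_⟩
    · intro h
      have := map_sub_one a hd
      rw [h] at this
      exact inv_ne_zero hd (by linear_combination -this)
    · rw [map_mul, phi_inv _ hd, ← map_mul, hφ]
  · intro a ha
    simp only [Finset.mem_filter, Finset.mem_univ, true_and] at ha ⊢
    obtain ⟨h0, h1, hφ⟩ := ha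
    have hd : a - 1 ≠ 0 := sub_ne_zero.2 h1
    refine ⟨mul_ne_zero h0 (inv_ne_zero hd), ?_, ?_⟩
    · intro h
      have := map_sub_one a hd
      rw [h] at this
      exact inv_ne_zero hd (by linear_combination -this)
    · rw [map_sub_one a hd, map_mul, map_mul, phi_inv _ hd, hφ, one_mul, phi_sq _ hd]
  · intro a ha
    simp only [Finset.mem_filter, Finset.mem_univ, true_and] at ha
    exact invol a (sub_ne_zero.2 ha.2.1)
  · intro a ha
    simp only [Finset.mem_filter, Finset.mem_univ, true_and] at ha
    exact invol a (sub_ne_zero.2 ha.2.1)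
  · intro a ha
    simp only [Finset.mem_filter, Finset.mem_univ, true_and] at ha
    obtain ⟨h0, h1, hφ⟩ := ha
    have hd : a - 1 ≠ 0 := sub_ne_zero.2 h1
    have h2 : χ₄ (a - 1) * χ₄ (a - 1) = ((quadraticChar (ZMod p) (a - 1) : ℤ) : ℂ) := by
      rw [← sq, ← MulChar.pow_apply' χ₄ (by norm_num) (a - 1), hsq,
        MulChar.ringHomComp_apply]
      rfl
    have h1' : χ₄ (a - 1)⁻¹ * χ₄ (a - 1) = 1 := by
      rw [← map_mul, inv_mul_cancel₀ hd, map_one]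
    have hne : χ₄ (a - 1) ≠ 0 := right_ne_zero_of_mul_eq_one h1'
    have ht : ((quadraticChar (ZMod p) (a - 1) : ℤ) : ℂ) *
        ((quadraticChar (ZMod p) (a - 1) : ℤ) : ℂ) = 1 := by
      rw [← Int.cast_mul, phi_sq _ hd, Int.cast_one]
    have hv : χ₄ (a - 1)⁻¹ = χ₄ (a - 1) * ((quadraticChar (ZMod p) (a - 1) : ℤ) : ℂ) := by
      have haux : χ₄ (a - 1) * ((quadraticChar (ZMod p) (a - 1) : ℤ) : ℂ) * χ₄ (a - 1) = 1 := by
        rw [mul_right_comm, h2, ht]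
      exact mul_right_cancel₀ hne (h1'.trans haux.symm)
    rw [ap_step hp a hd, map_sub_one a hd, phi_inv _ hd, map_mul, map_mul, hv]
    push_cast
    linear_combination (-((apLegendre p a : ℂ) * χ₄ a * χ₄ (a - 1) *
      ((quadraticChar (ZMod p) (a - 1) : ℤ) : ℂ))) * ht
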